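/- For the entropy function $U$ and weights $p_k$ on the interior of a polytope with vertices $a_1,\dots,a_n$, for every interior point $x$ and every direction $\xi \in \mathbb{R}^d$, the second directional derivative satisfies $U_{(\xi)(\xi)}(x) = -\sum_{k=1}^n (p_{k(\xi)}(x))^2 / p_k(x)^2$, where $p_{k(\xi)} = (\xi, \nabla p_k)$. -/

import Mathlib

open Finset

/-- The entropy function of a polytope with vertices `a 1, …, a n`:
`U(x) = sup { ∑ᵢ ln pᵢ : pᵢ > 0, ∑ pᵢ = 1, ∑ pᵢ aᵢ = x }`. -/
noncomputable def entropyU {d n : ℕ} (a : Fin n → EuclideanSpace ℝ (Fin d))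
    (x : EuclideanSpace ℝ (Fin d)) : ℝ :=
  sSup {s | ∃ p : Fin n → ℝ, (∀ i, 0 < p i) ∧ ∑ i, p i = 1 ∧
    ∑ i, p i • a i = x ∧ s = ∑ i, Real.log (p i)}

open Real RealInnerProductSpace Filter Topology



/-- Strict concavity comparison: if `∑ (r i - q i)/q i = 0` then `∑ log r ≤ ∑ log q`,
with equality iff `r = q`. -/
lemma entropy_aux_le {n : ℕ} {r q : Fin n → ℝ} (hr : ∀ i, 0 < r i) (hq : ∀ i, 0 < q i)
    (h : ∑ i, (r i - q i) / q i = 0) :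
    ∑ i, Real.log (r i) ≤ ∑ i, Real.log (q i) ∧
      (∑ i, Real.log (r i) = ∑ i, Real.log (q i) → r = q) := by
  have key : ∀ i, Real.log (r i) - Real.log (q i) ≤ (r i - q i) / q i := by
    intro i
    have h1 : Real.log (r i) - Real.log (q i) = Real.log (r i / q i) := by
      rw [Real.log_div (hr i).ne' (hq i).ne']
    have h2 : Real.log (r i / q i) ≤ r i / q i - 1 :=
      Real.log_le_sub_one_of_pos (div_pos (hr i) (hq i))
    have h3 : r i / q i - 1 = (r i - q i) / q i := by
      rw [sub_div, div_self (hq i).ne']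
    linarith
  have hsum : ∑ i, (Real.log (r i) - Real.log (q i)) ≤ ∑ i, (r i - q i) / q i :=
    Finset.sum_le_sum fun i _ => key i
  rw [Finset.sum_sub_distrib, h] at hsum
  constructor
  · linarith
  · intro heq
    by_contra hne
    have : ∃ j, r j ≠ q j := by
      by_contra hc
      push_neg at hc
      exact hne (funext hc)
    obtain ⟨j, hj⟩ := this
    -- strict inequality at j
    have keyj : Real.log (r j) - Real.log (q j) < (r j - q j) / q j := by
      have h1 : Real.log (r j) - Real.log (q j) = Real.log (r j / q j) := by
        rw [Real.log_div (hr j).ne' (hq j).ne']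
      have hne1 : r j / q j ≠ 1 := by
        intro hc
        exact hj (by rw [div_eq_one_iff_eq (hq j).ne'] at hc; exact hc)
      have h2 : Real.log (r j / q j) < r j / q j - 1 :=
        Real.log_lt_sub_one_of_pos (div_pos (hr j) (hq j)) hne1
      have h3 : r j / q j - 1 = (r j - q j) / q j := by
        rw [sub_div, div_self (hq j).ne']
      linarith
    have hstrict : ∑ i, (Real.log (r i) - Real.log (q i)) < ∑ i, (r i - q i) / q i :=
      Finset.sum_lt_sum (fun i _ => key i) ⟨j, Finset.mem_univ j, keyj⟩
    rw [Finset.sum_sub_distrib, h] at hstrict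
    linarith

/-- If `q` is feasible and satisfies the Lagrange (KKT) condition, then `q` is the unique
maximizer and the entropy equals `∑ log q`. -/
lemma entropy_value {d n : ℕ} {a : Fin n → EuclideanSpace ℝ (Fin d)}
    {x : EuclideanSpace ℝ (Fin d)} {q : Fin n → ℝ} {lam : ℝ} {Y : EuclideanSpace ℝ (Fin d)}
    (hq : ∀ i, 0 < q i) (h1 : ∑ i, q i = 1) (h2 : ∑ i, q i • a i = x)
    (hL : ∀ i, (q i)⁻¹ = lam + ⟪a i, Y⟫) :
    (entropyU a x = ∑ i, Real.log (q i)) ∧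
      ∀ r : Fin n → ℝ, (∀ i, 0 < r i) → ∑ i, r i = 1 → ∑ i, r i • a i = x →
        ∑ i, Real.log (r i) = ∑ i, Real.log (q i) → r = q := by
  have hcomp : ∀ r : Fin n → ℝ, (∀ i, 0 < r i) → ∑ i, r i = 1 → ∑ i, r i • a i = x →
      ∑ i, (r i - q i) / q i = 0 := by
    intro r hr hr1 hr2
    have : ∀ i, (r i - q i) / q i = (r i - q i) * lam + ⟪(r i - q i) • a i, Y⟫ := by
      intro i
      rw [real_inner_smul_left, div_eq_mul_inv, hL i]
      ring
    rw [Finset.sum_congr rfl fun i _ => this i, Finset.sum_add_distrib,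
      ← Finset.sum_mul, ← sum_inner]
    have e1 : ∑ i, (r i - q i) = 0 := by
      rw [Finset.sum_sub_distrib, hr1, h1, sub_self]
    have e2 : ∑ i, (r i - q i) • a i = 0 := by
      have : ∀ i, (r i - q i) • a i = r i • a i - q i • a i := fun i => sub_smul _ _ _
      rw [Finset.sum_congr rfl fun i _ => this i, Finset.sum_sub_distrib, hr2, h2, sub_self]
    rw [e1, e2, zero_mul, inner_zero_left, add_zero]
  constructor
  · apply IsGreatest.csSup_eq
    constructor
    · exact ⟨q, hq, h1, h2, rfl⟩
    · rintro s ⟨r, hr, hr1, hr2, rfl⟩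
      exact (entropy_aux_le hr hq (hcomp r hr hr1 hr2)).1
  · intro r hr hr1 hr2 heq
    exact (entropy_aux_le hr hq (hcomp r hr hr1 hr2)).2 heq

lemma span_top_aux {d n : ℕ} (hn : 0 < n) {a : Fin n → EuclideanSpace ℝ (Fin d)}
    (h : (interior (convexHull ℝ (Set.range a))).Nonempty)
    {y : EuclideanSpace ℝ (Fin d)} {c : ℝ} (hy : ∀ i, c + ⟪a i, y⟫ = 0) :
    y = 0 ∧ c = 0 := by
  have hconv : Convex ℝ (convexHull ℝ (Set.range a)) := convex_convexHull ℝ _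
  have hsp : affineSpan ℝ (convexHull ℝ (Set.range a)) = ⊤ :=
    (hconv.interior_nonempty_iff_affineSpan_eq_top).mp h
  rw [affineSpan_convexHull] at hsp
  have hvs : vectorSpan ℝ (Set.range a) = ⊤ := by
    rw [← direction_affineSpan, hsp]
    exact AffineSubspace.direction_top ℝ _ _
  have hy0 : y = 0 := by
    have hmem : y ∈ vectorSpan ℝ (Set.range a) := by rw [hvs]; trivial
    rw [vectorSpan_def] at hmem
    have : ⟪y, y⟫ = (0:ℝ) := by
      refine Submodule.span_induction (p := fun v _ => ⟪v, y⟫ = (0:ℝ)) ?_ ?_ ?_ ?_ hmem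
      · rintro v ⟨v1, hv1, v2, hv2, rfl⟩
        obtain ⟨i, rfl⟩ := hv1
        obtain ⟨j, rfl⟩ := hv2
        have := hy i
        have := hy j
        simp only [vsub_eq_sub, inner_sub_left]
        have e1 : c + ⟪a i, y⟫ = 0 := hy i
        have e2 : c + ⟪a j, y⟫ = 0 := hy j
        linarith
      · simp
      · intro u v _ _ hu hv
        rw [inner_add_left, hu, hv, add_zero]
      · intro r u _ hu
        rw [real_inner_smul_left, hu, mul_zero]
    exact inner_self_eq_zero.mp this
  refine ⟨hy0, ?_⟩
  have := hy ⟨0, hn⟩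
  rw [hy0, inner_zero_right, add_zero] at this
  exact this

lemma entropy_bddAbove {d n : ℕ} (a : Fin n → EuclideanSpace ℝ (Fin d))
    (x : EuclideanSpace ℝ (Fin d)) :
    BddAbove {s | ∃ p : Fin n → ℝ, (∀ i, 0 < p i) ∧ ∑ i, p i = 1 ∧
      ∑ i, p i • a i = x ∧ s = ∑ i, Real.log (p i)} := by
  refine ⟨0, ?_⟩
  rintro s ⟨p, hp, h1, -, rfl⟩
  have hle : ∀ i, p i ≤ 1 := fun i => by
    calc p i ≤ ∑ j, p j := Finset.single_le_sum (fun j _ => (hp j).le) (Finset.mem_univ i)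
    _ = 1 := h1
  exact Finset.sum_nonpos fun i _ => Real.log_nonpos (hp i).le (hle i)

lemma lagrange_exists {d n : ℕ} {a : Fin n → EuclideanSpace ℝ (Fin d)}
    {x : EuclideanSpace ℝ (Fin d)} {p0 : Fin n → ℝ}
    (hpos : ∀ i, 0 < p0 i) (h1 : ∑ i, p0 i = 1) (h2 : ∑ i, p0 i • a i = x)
    (hmax : ∑ i, Real.log (p0 i) = entropyU a x) :
    ∃ lam : ℝ, ∃ Y : EuclideanSpace ℝ (Fin d), ∀ i, (p0 i)⁻¹ = lam + ⟪a i, Y⟫ := by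
  -- first-order condition
  have orth : ∀ v : Fin n → ℝ, ∑ i, v i = 0 → ∑ i, v i • a i = 0 →
      ∑ i, v i * (p0 i)⁻¹ = 0 := by
    intro v hv1 hv2
    set φ : ℝ → ℝ := fun t => ∑ i, Real.log (p0 i + t * v i) with hφ
    have hpos' : ∀ᶠ t in 𝓝 (0:ℝ), ∀ i, 0 < p0 i + t * v i := by
      refine Filter.eventually_all.mpr fun i => ?_
      have hc : Continuous fun t : ℝ => p0 i + t * v i := by continuity
      have htend : Filter.Tendsto (fun t : ℝ => p0 i + t * v i) (𝓝 0) (𝓝 (p0 i)) := by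
        simpa using hc.tendsto 0
      exact htend.eventually (eventually_gt_nhds (hpos i))
    have hlocmax : IsLocalMax φ 0 := by
      filter_upwards [hpos'] with t ht
      have hfeas1 : ∑ i, (p0 i + t * v i) = 1 := by
        rw [Finset.sum_add_distrib, h1, ← Finset.mul_sum, hv1, mul_zero, add_zero]
      have hfeas2 : ∑ i, (p0 i + t * v i) • a i = x := by
        have : ∀ i, (p0 i + t * v i) • a i = p0 i • a i + t • (v i • a i) := by
          intro i; rw [add_smul, smul_smul]
        rw [Finset.sum_congr rfl fun i _ => this i, Finset.sum_add_distrib, h2,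
          ← Finset.smul_sum, hv2, smul_zero, add_zero]
      have hmem : φ t ∈ {s | ∃ p : Fin n → ℝ, (∀ i, 0 < p i) ∧ ∑ i, p i = 1 ∧
          ∑ i, p i • a i = x ∧ s = ∑ i, Real.log (p i)} :=
        ⟨fun i => p0 i + t * v i, ht, hfeas1, hfeas2, rfl⟩
      have : φ t ≤ entropyU a x := le_csSup (entropy_bddAbove a x) hmem
      have hφ0 : φ 0 = ∑ i, Real.log (p0 i) := by simp [hφ]
      rw [hφ0, hmax]
      exact this
    have hderiv : HasDerivAt φ (∑ i, v i * (p0 i)⁻¹) 0 := by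
      apply HasDerivAt.fun_sum
      intro i _
      have hinner : HasDerivAt (fun t : ℝ => p0 i + t * v i) (v i) 0 := by
        simpa using ((hasDerivAt_id (0:ℝ)).mul_const (v i)).const_add (p0 i)
      have hlog : HasDerivAt Real.log (p0 i + 0 * v i)⁻¹ ((fun t : ℝ => p0 i + t * v i) 0) := by
        apply Real.hasDerivAt_log
        simp [(hpos i).ne']
      have := hlog.comp (0:ℝ) hinner
      simpa [mul_comm, Function.comp_def] using this
    have := hlocmax.hasDerivAt_eq_zero hderiv
    exact this
  -- orthogonal complement argument
  set S : (ℝ × EuclideanSpace ℝ (Fin d)) →ₗ[ℝ] EuclideanSpace ℝ (Fin n) :=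
    { toFun := fun z => WithLp.toLp 2 (fun i => z.1 + ⟪a i, z.2⟫)
      map_add' := by
        intro z w
        ext i
        simp [inner_add_right]
        ring
      map_smul' := by
        intro r z
        ext i
        simp [real_inner_smul_right, Finset.mul_sum]
        ring_nf } with hS
  set V := LinearMap.range S with hV
  set w : EuclideanSpace ℝ (Fin n) := (WithLp.equiv 2 (Fin n → ℝ)).symm (fun i => (p0 i)⁻¹)
    with hwdef0
  have hw : w ∈ V := by
    rw [← Submodule.orthogonal_orthogonal V]
    rw [Submodule.mem_orthogonal]
    intro u hu
    rw [Submodule.mem_orthogonal] at hu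
    have hSz : ∀ z, ⟪S z, u⟫ = 0 := fun z => hu (S z) (LinearMap.mem_range_self S z)
    have key : ∀ (c : ℝ) (Y : EuclideanSpace ℝ (Fin d)),
        ∑ i, (c + ⟪a i, Y⟫) * u i = 0 := by
      intro c Y
      have := hSz (c, Y)
      simpa [PiLp.inner_apply, RCLike.inner_apply, hS, mul_comm] using this
    have e1 : ∑ i, u i = 0 := by
      have := key 1 0
      simpa using this
    have e2 : ∀ Y : EuclideanSpace ℝ (Fin d), ∑ i, ⟪a i, Y⟫ * u i = 0 := by
      intro Y
      have := key 0 Y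
      simpa using this
    have e3 : ∑ i, u i • a i = 0 := by
      set w := ∑ i, u i • a i with hwdef
      have : ⟪w, w⟫ = (0:ℝ) := by
        rw [hwdef]
        rw [sum_inner]
        have : ∀ i, ⟪u i • a i, w⟫ = ⟪a i, w⟫ * u i := by
          intro i; rw [real_inner_smul_left]; ring
        rw [Finset.sum_congr rfl fun i _ => this i]
        exact e2 w
      exact inner_self_eq_zero.mp this
    have horth := orth u e1 e3
    rw [PiLp.inner_apply]
    simp only [RCLike.inner_apply, conj_trivial, hwdef0, WithLp.equiv_symm_apply, PiLp.toLp_apply]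
    simpa [mul_comm] using horth
  obtain ⟨z₀, hz₀⟩ := hw
  refine ⟨z₀.1, z₀.2, fun i => ?_⟩
  have h' := congrArg (fun v : EuclideanSpace ℝ (Fin n) => v i) hz₀
  simp only [hwdef0, WithLp.equiv_symm_apply, PiLp.toLp_apply] at h'
  exact (h').symm

lemma exists_local_q {d n : ℕ} (hn : 0 < n) {a : Fin n → EuclideanSpace ℝ (Fin d)}
    (hintc : (interior (convexHull ℝ (Set.range a))).Nonempty)
    {x₀ : EuclideanSpace ℝ (Fin d)} {p0 : Fin n → ℝ} {lam0 : ℝ}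
    {Y0 : EuclideanSpace ℝ (Fin d)}
    (hpos : ∀ i, 0 < p0 i) (h1 : ∑ i, p0 i = 1) (h2 : ∑ i, p0 i • a i = x₀)
    (hL : ∀ i, (p0 i)⁻¹ = lam0 + ⟪a i, Y0⟫) :
    ∃ Z : EuclideanSpace ℝ (Fin d) → ℝ × EuclideanSpace ℝ (Fin d),
      ContDiffAt ℝ 2 Z x₀ ∧ Z x₀ = (lam0, Y0) ∧
      ∀ᶠ x' in 𝓝 x₀,
        (∀ i, 0 < (Z x').1 + ⟪a i, (Z x').2⟫) ∧
        (∑ i, ((Z x').1 + ⟪a i, (Z x').2⟫)⁻¹ = 1) ∧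
        (∑ i, ((Z x').1 + ⟪a i, (Z x').2⟫)⁻¹ • a i = x') := by
  classical
  set z₀ : ℝ × EuclideanSpace ℝ (Fin d) := (lam0, Y0) with hz₀def
  set L : (ℝ × EuclideanSpace ℝ (Fin d)) → Fin n → ℝ := fun z i => z.1 + ⟪a i, z.2⟫ with hLdef
  have hL0 : ∀ i, L z₀ i = (p0 i)⁻¹ := by
    intro i
    simp only [hLdef, hz₀def]
    exact (hL i).symm
  have hL0pos : ∀ i, 0 < L z₀ i := fun i => (hL0 i).symm ▸ inv_pos.mpr (hpos i)
  set M : Fin n → (ℝ × EuclideanSpace ℝ (Fin d)) →L[ℝ] ℝ := fun i =>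
    ContinuousLinearMap.fst ℝ ℝ (EuclideanSpace ℝ (Fin d)) +
      (innerSL ℝ (a i)).comp (ContinuousLinearMap.snd ℝ ℝ (EuclideanSpace ℝ (Fin d)))
    with hMdef
  have hMapp : ∀ i z, M i z = L z i := by
    intro i z
    simp [hMdef, hLdef]
  set G : (ℝ × EuclideanSpace ℝ (Fin d)) → ℝ × EuclideanSpace ℝ (Fin d) :=
    fun z => (∑ i, (L z i)⁻¹, ∑ i, (L z i)⁻¹ • a i) with hGdef
  have hMeq : ∀ i, (fun z => L z i) = fun z => M i z := by
    intro i; funext z; rw [hMapp]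
  have hcomp_cd : ∀ i, ContDiffAt ℝ 2 (fun z => (L z i)⁻¹) z₀ := by
    intro i
    have h1' : ContDiffAt ℝ 2 (fun z => L z i) z₀ := by
      rw [hMeq]
      exact ((M i).contDiff (n := 2)).contDiffAt
    exact h1'.inv (hL0pos i).ne'
  have hGcd : ContDiffAt ℝ 2 G z₀ := by
    apply ContDiffAt.prodMk
    · exact ContDiffAt.sum fun i _ => hcomp_cd i
    · exact ContDiffAt.sum fun i _ => (hcomp_cd i).smul contDiffAt_const
  set c : Fin n → ℝ := fun i => -((L z₀ i) ^ 2)⁻¹ with hcdef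
  have hcneg : ∀ i, c i < 0 := fun i => by
    simp only [hcdef, neg_lt, neg_zero]
    exact inv_pos.mpr (pow_pos (hL0pos i) 2)
  set A : (ℝ × EuclideanSpace ℝ (Fin d)) →L[ℝ] ℝ := ∑ i, c i • M i with hAdef
  set B : (ℝ × EuclideanSpace ℝ (Fin d)) →L[ℝ] EuclideanSpace ℝ (Fin d) :=
    ∑ i, (c i • M i).smulRight (a i) with hBdef
  have hinv : ∀ i, HasFDerivAt (fun z => (L z i)⁻¹) (c i • M i) z₀ := by
    intro i
    have hM : HasFDerivAt (fun z => L z i) (M i) z₀ := by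
      rw [hMeq]
      exact (M i).hasFDerivAt
    exact (hasDerivAt_inv (hL0pos i).ne').comp_hasFDerivAt z₀ hM
  have hderivG : HasFDerivAt G (A.prod B) z₀ := by
    apply HasFDerivAt.prodMk
    · exact HasFDerivAt.fun_sum fun i _ => hinv i
    · exact HasFDerivAt.fun_sum fun i _ => (hinv i).smul_const (a i)
  set T := A.prod B with hTdef
  have hker : ∀ δ : ℝ × EuclideanSpace ℝ (Fin d), T δ = 0 → δ = 0 := by
    intro δ hδ
    have hA : A δ = 0 := by
      have := congrArg Prod.fst hδ
      simpa [hTdef] using this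
    have hB : B δ = 0 := by
      have := congrArg Prod.snd hδ
      simpa [hTdef] using this
    set u : Fin n → ℝ := fun i => M i δ with hudef
    have hAs : ∑ i, c i * u i = 0 := by
      rw [hAdef] at hA
      simpa [ContinuousLinearMap.sum_apply] using hA
    have hBs : ∑ i, (c i * u i) • a i = 0 := by
      rw [hBdef] at hB
      simpa [ContinuousLinearMap.sum_apply, smul_smul] using hB
    have huapp : ∀ i, u i = δ.1 + ⟪a i, δ.2⟫ := by
      intro i
      simp only [hudef]
      rw [hMapp]
    have hquad : ∑ i, (c i * u i) * u i = 0 := by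
      have hterm : ∀ i, (c i * u i) * u i = (c i * u i) * δ.1 + ⟪(c i * u i) • a i, δ.2⟫ := by
        intro i
        rw [real_inner_smul_left]
        nth_rewrite 2 [huapp i]
        ring
      rw [Finset.sum_congr rfl fun i _ => hterm i, Finset.sum_add_distrib, ← Finset.sum_mul,
        hAs, ← sum_inner, hBs, zero_mul, inner_zero_left, add_zero]
    have hu0 : ∀ i, u i = 0 := by
      have hnp : ∀ i ∈ Finset.univ, (c i * u i) * u i ≤ (0:ℝ) := by
        intro i _
        have e : (c i * u i) * u i = c i * (u i)^2 := by ring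
        rw [e]
        exact mul_nonpos_of_nonpos_of_nonneg (hcneg i).le (sq_nonneg _)
      intro i
      by_contra hne
      have hlt : (c i * u i) * u i < 0 := by
        have e : (c i * u i) * u i = c i * (u i)^2 := by ring
        rw [e]
        exact mul_neg_of_neg_of_pos (hcneg i) (pow_two_pos_of_ne_zero hne)
      have hsum : ∑ j, (c j * u j) * u j < ∑ _j : Fin n, (0:ℝ) :=
        Finset.sum_lt_sum hnp ⟨i, Finset.mem_univ i, by simpa using hlt⟩
      rw [hquad, Finset.sum_const, smul_zero] at hsum
      exact lt_irrefl 0 hsum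
    have hMδ : ∀ i, δ.1 + ⟪a i, δ.2⟫ = 0 := fun i => (huapp i) ▸ hu0 i
    obtain ⟨hsnd, hfst⟩ := span_top_aux hn hintc hMδ
    exact Prod.ext hfst hsnd
  -- upgrade to an equivalence
  have hinjT : Function.Injective T := by
    intro δ1 δ2 h
    have : T (δ1 - δ2) = 0 := by rw [map_sub, h, sub_self]
    have := hker _ this
    exact sub_eq_zero.mp this
  have hbij : Function.Bijective (T : (ℝ × EuclideanSpace ℝ (Fin d)) →ₗ[ℝ]
      (ℝ × EuclideanSpace ℝ (Fin d))) := by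
    refine ⟨hinjT, ?_⟩
    exact (LinearMap.injective_iff_surjective (f := (T : (ℝ × EuclideanSpace ℝ (Fin d)) →ₗ[ℝ]
      (ℝ × EuclideanSpace ℝ (Fin d))))).mp hinjT
  set eT : (ℝ × EuclideanSpace ℝ (Fin d)) ≃L[ℝ] (ℝ × EuclideanSpace ℝ (Fin d)) :=
    (LinearEquiv.ofBijective _ hbij).toContinuousLinearEquiv with heTdef
  have heT : (eT : (ℝ × EuclideanSpace ℝ (Fin d)) →L[ℝ] (ℝ × EuclideanSpace ℝ (Fin d))) = T := by
    apply ContinuousLinearMap.ext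
    intro v
    rfl
  have hderivG' : HasFDerivAt G
      (eT : (ℝ × EuclideanSpace ℝ (Fin d)) →L[ℝ] (ℝ × EuclideanSpace ℝ (Fin d))) z₀ := by
    rw [heT]; exact hderivG
  -- local inverse
  have h12 : (2 : WithTop ℕ∞) ≠ 0 := by norm_num
  set g := hGcd.localInverse hderivG' h12 with hgdef
  have hgcd : ContDiffAt ℝ 2 g (G z₀) := hGcd.to_localInverse hderivG' h12
  have hgleft : g (G z₀) = z₀ := hGcd.localInverse_apply_image hderivG' h12
  have hgright : ∀ᶠ w in 𝓝 (G z₀), G (g w) = w :=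
    (hGcd.hasStrictFDerivAt' hderivG' h12).eventually_right_inverse
  have hGz₀ : G z₀ = (1, x₀) := by
    have e1 : ∑ i, (L z₀ i)⁻¹ = 1 := by
      rw [Finset.sum_congr rfl fun i _ => by rw [hL0 i, inv_inv]]
      exact h1
    have e2 : ∑ i, (L z₀ i)⁻¹ • a i = x₀ := by
      rw [Finset.sum_congr rfl fun i _ => by rw [hL0 i, inv_inv]]
      exact h2
    simp only [hGdef]
    exact Prod.ext e1 e2
  refine ⟨fun x' => g (1, x'), ?_, ?_, ?_⟩
  · have hmk : ContDiffAt ℝ 2 (fun x' : EuclideanSpace ℝ (Fin d) => ((1:ℝ), x')) x₀ :=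
      contDiffAt_const.prodMk contDiffAt_id
    have : ContDiffAt ℝ 2 g ((1:ℝ), x₀) := by rwa [hGz₀] at hgcd
    exact this.comp x₀ hmk
  · show g ((1:ℝ), x₀) = z₀
    rw [← hGz₀]
    exact hgleft
  · have htend : Filter.Tendsto (fun x' : EuclideanSpace ℝ (Fin d) => ((1:ℝ), x')) (𝓝 x₀)
        (𝓝 ((1:ℝ), x₀)) := by
      exact (continuous_const.prodMk continuous_id).tendsto x₀
    rw [hGz₀] at hgright
    have hev : ∀ᶠ x' in 𝓝 x₀, G (g (1, x')) = (1, x') := htend.eventually hgright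
    -- positivity eventually
    have hcontL : ∀ i, ContinuousAt (fun x' => L (g (1, x')) i) x₀ := by
      intro i
      have hgc : ContinuousAt g ((1:ℝ), x₀) := by
        have : ContDiffAt ℝ 2 g ((1:ℝ), x₀) := by rwa [hGz₀] at hgcd
        exact this.continuousAt
      have hLc : Continuous (fun z => L z i) := by
        rw [hMeq]
        exact (M i).continuous
      exact (hLc.continuousAt).comp (hgc.comp ((continuous_const.prodMk continuous_id).continuousAt))
    have hposev : ∀ᶠ x' in 𝓝 x₀, ∀ i, 0 < L (g (1, x')) i := by
      refine Filter.eventually_all.mpr fun i => ?_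
      have hval : (fun x' => L (g ((1:ℝ), x')) i) x₀ = L z₀ i := by
        show L (g ((1:ℝ), x₀)) i = L z₀ i
        rw [← hGz₀, hgleft]
      have := (hcontL i).eventually (eventually_gt_nhds (show (0:ℝ) < (fun x' => L (g ((1:ℝ), x')) i) x₀ from by rw [hval]; exact hL0pos i))
      simpa using this
    filter_upwards [hev, hposev] with x' h1' h2'
    refine ⟨h2', ?_, ?_⟩
    · have := congrArg Prod.fst h1'
      simpa [hGdef, hLdef] using this
    · have := congrArg Prod.snd h1'
      simpa [hGdef, hLdef] using this

/-- Second directional derivative identity: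
`U_{(ξ)(ξ)}(x) = -∑ₖ (p_{k(ξ)}(x))² / pₖ(x)²`. -/
theorem stmt_12 {d n : ℕ} (hn : 2 ≤ n) (a : Fin n → EuclideanSpace ℝ (Fin d))
    (ha : Function.Injective a)
    (P : Set (EuclideanSpace ℝ (Fin d)))
    (hP : P = convexHull ℝ (Set.range a))
    (hvert : ∀ i, a i ∈ Set.extremePoints ℝ P)
    (hint : (interior P).Nonempty)
    (p : EuclideanSpace ℝ (Fin d) → Fin n → ℝ)
    (hp : ∀ x ∈ interior P, (∀ i, 0 < p x i) ∧ ∑ i, p x i = 1 ∧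
      ∑ i, p x i • a i = x ∧ ∑ i, Real.log (p x i) = entropyU a x) :
    ∀ x ∈ interior P, ∀ ξ : EuclideanSpace ℝ (Fin d),
      fderiv ℝ (fun y => fderiv ℝ (entropyU a) y ξ) x ξ
        = -∑ k, (fderiv ℝ (fun y => p y k) x ξ) ^ 2 / (p x k) ^ 2 := by
  intro x₀ hx₀ ξ
  classical
  obtain ⟨hpos, h1, h2, hmax⟩ := hp x₀ hx₀
  have hintc : (interior (convexHull ℝ (Set.range a))).Nonempty := hP ▸ hint
  have hn0 : 0 < n := lt_of_lt_of_le two_pos hn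
  obtain ⟨lam0, Y0, hL⟩ := lagrange_exists hpos h1 h2 hmax
  obtain ⟨Z, hZcd, hZx₀, hZev⟩ := exists_local_q hn0 hintc hpos h1 h2 hL
  -- notation
  set Lf : EuclideanSpace ℝ (Fin d) → Fin n → ℝ := fun y i => (Z y).1 + ⟪a i, (Z y).2⟫
    with hLfdef
  set q : EuclideanSpace ℝ (Fin d) → Fin n → ℝ := fun y i => (Lf y i)⁻¹ with hqdef
  set Λ : Fin n → (ℝ × EuclideanSpace ℝ (Fin d)) →L[ℝ] ℝ := fun i =>
    ContinuousLinearMap.fst ℝ ℝ (EuclideanSpace ℝ (Fin d)) +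
      (innerSL ℝ (a i)).comp (ContinuousLinearMap.snd ℝ ℝ (EuclideanSpace ℝ (Fin d)))
    with hΛdef
  have hΛapp : ∀ i z, Λ i z = z.1 + ⟪a i, z.2⟫ := by
    intro i z
    simp [hΛdef]
  have hΛLf : ∀ i, (fun y => Lf y i) = fun y => Λ i (Z y) := by
    intro i
    funext y
    rw [hΛapp]
  -- eventual facts
  have h2ne : (2 : WithTop ℕ∞) ≠ ((⊤ : ℕ∞) : WithTop ℕ∞) := by decide
  have hZev2 : ∀ᶠ x' in 𝓝 x₀, ContDiffAt ℝ 2 Z x' := hZcd.eventually h2ne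
  have hC4 : ∀ᶠ x' in 𝓝 x₀, entropyU a x' = ∑ i, Real.log (q x' i) ∧
      (∀ r : Fin n → ℝ, (∀ i, 0 < r i) → ∑ i, r i = 1 → ∑ i, r i • a i = x' →
        ∑ i, Real.log (r i) = ∑ i, Real.log (q x' i) → r = q x') := by
    filter_upwards [hZev] with x' hx'
    obtain ⟨hpos', hs1', hs2'⟩ := hx'
    have hqpos : ∀ i, 0 < q x' i := fun i => inv_pos.mpr (hpos' i)
    have hLrel : ∀ i, (q x' i)⁻¹ = (Z x').1 + ⟪a i, (Z x').2⟫ := by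
      intro i
      rw [hqdef]
      simp only []
      rw [inv_inv]
    exact entropy_value hqpos hs1' hs2' hLrel
  set BIG : EuclideanSpace ℝ (Fin d) → Prop := fun x' =>
    ((∀ i, 0 < Lf x' i) ∧ (∑ i, q x' i = 1) ∧ (∑ i, q x' i • a i = x')) ∧
    (entropyU a x' = ∑ i, Real.log (q x' i)) ∧ ContDiffAt ℝ 2 Z x' with hBIGdef
  have hbig : ∀ᶠ x' in 𝓝 x₀, BIG x' := by
    filter_upwards [hZev, hC4, hZev2] with x' h1' h2' h3'
    exact ⟨h1', h2'.1, h3'⟩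
  have hbig2 : ∀ᶠ x' in 𝓝 x₀, ∀ᶠ y in 𝓝 x', BIG y := hbig.eventually_nhds
  -- the generic-point derivative computation
  have key : ∀ w : EuclideanSpace ℝ (Fin d), (∀ᶠ y in 𝓝 w, BIG y) →
      (∀ i, HasFDerivAt (fun y => q y i)
        ((-(Lf w i ^ 2)⁻¹) • ((Λ i).comp (fderiv ℝ Z w))) w) ∧
      (∑ i, ((-(Lf w i ^ 2)⁻¹) • ((Λ i).comp (fderiv ℝ Z w))) ξ = 0) ∧
      (∑ i, (((-(Lf w i ^ 2)⁻¹) • ((Λ i).comp (fderiv ℝ Z w))) ξ) • a i = ξ) ∧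
      fderiv ℝ (entropyU a) w ξ = ⟪ξ, (Z w).2⟫ := by
    intro w hw
    have hself := hw.self_of_nhds
    have hZw : ContDiffAt ℝ 2 Z w := hself.2.2
    have hposw : ∀ i, 0 < Lf w i := hself.1.1
    have hDZ : HasFDerivAt Z (fderiv ℝ Z w) w :=
      (hZw.differentiableAt two_ne_zero).hasFDerivAt
    set DZ := fderiv ℝ Z w with hDZdef
    have hLfD : ∀ i, HasFDerivAt (fun y => Lf y i) ((Λ i).comp DZ) w := by
      intro i
      rw [hΛLf]
      exact ((Λ i).hasFDerivAt).comp w hDZ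
    have hqD : ∀ i, HasFDerivAt (fun y => q y i)
        ((-(Lf w i ^ 2)⁻¹) • ((Λ i).comp DZ)) w := by
      intro i
      exact (hasDerivAt_inv (hposw i).ne').comp_hasFDerivAt w (hLfD i)
    refine ⟨hqD, ?_, ?_, ?_⟩
    case _ =>
      -- sum of q is constant 1
      have hconst : HasFDerivAt (fun y => ∑ i, q y i) (0 : EuclideanSpace ℝ (Fin d) →L[ℝ] ℝ) w := by
        have : (fun y : EuclideanSpace ℝ (Fin d) => ∑ i, q y i) =ᶠ[𝓝 w]
            fun _ => (1:ℝ) := hw.mono fun y hy => hy.1.2.1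
        exact (hasFDerivAt_const (1:ℝ) w).congr_of_eventuallyEq this
      have hsum : HasFDerivAt (fun y => ∑ i, q y i)
          (∑ i, (-(Lf w i ^ 2)⁻¹) • ((Λ i).comp DZ)) w := HasFDerivAt.fun_sum fun i _ => hqD i
      have := hsum.unique hconst
      calc ∑ i, ((-(Lf w i ^ 2)⁻¹) • ((Λ i).comp DZ)) ξ
          = (∑ i, (-(Lf w i ^ 2)⁻¹) • ((Λ i).comp DZ)) ξ := by
            rw [ContinuousLinearMap.sum_apply]
        _ = 0 := by rw [this]; rfl
    case _ =>
      have hid : HasFDerivAt (fun y : EuclideanSpace ℝ (Fin d) => ∑ i, q y i • a i)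
          (ContinuousLinearMap.id ℝ (EuclideanSpace ℝ (Fin d))) w := by
        have : (fun y : EuclideanSpace ℝ (Fin d) => ∑ i, q y i • a i) =ᶠ[𝓝 w]
            id := hw.mono fun y hy => hy.1.2.2
        exact (hasFDerivAt_id w).congr_of_eventuallyEq this
      have hsum : HasFDerivAt (fun y : EuclideanSpace ℝ (Fin d) => ∑ i, q y i • a i)
          (∑ i, ((-(Lf w i ^ 2)⁻¹) • ((Λ i).comp DZ)).smulRight (a i)) w :=
        HasFDerivAt.fun_sum fun i _ => (hqD i).smul_const (a i)
      have := hsum.unique hid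
      calc ∑ i, (((-(Lf w i ^ 2)⁻¹) • ((Λ i).comp DZ)) ξ) • a i
          = (∑ i, ((-(Lf w i ^ 2)⁻¹) • ((Λ i).comp DZ)).smulRight (a i)) ξ := by
            rw [ContinuousLinearMap.sum_apply]
            rfl
        _ = ξ := by rw [this]; rfl
    case _ =>
      have hUev : entropyU a =ᶠ[𝓝 w] fun y => ∑ i, Real.log (q y i) :=
        hw.mono fun y hy => hy.2.1
      have hlog : HasFDerivAt (fun y => ∑ i, Real.log (q y i))
          (∑ i, (q w i)⁻¹ • ((-(Lf w i ^ 2)⁻¹) • ((Λ i).comp DZ))) w := by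
        apply HasFDerivAt.fun_sum
        intro i _
        have hne : q w i ≠ 0 := (inv_pos.mpr (hposw i)).ne'
        exact (Real.hasDerivAt_log hne).comp_hasFDerivAt w (hqD i)
      have hU : HasFDerivAt (entropyU a)
          (∑ i, (q w i)⁻¹ • ((-(Lf w i ^ 2)⁻¹) • ((Λ i).comp DZ))) w :=
        hlog.congr_of_eventuallyEq hUev
      rw [hU.fderiv]
      -- algebra
      have happ : ∀ i, ((q w i)⁻¹ • ((-(Lf w i ^ 2)⁻¹) • ((Λ i).comp DZ))) ξ
          = Lf w i * (((-(Lf w i ^ 2)⁻¹) • ((Λ i).comp DZ)) ξ) := by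
        intro i
        have : (q w i)⁻¹ = Lf w i := by
          rw [hqdef]
          simp only []
          rw [inv_inv]
        rw [ContinuousLinearMap.smul_apply, this, smul_eq_mul]
      rw [ContinuousLinearMap.sum_apply, Finset.sum_congr rfl fun i _ => happ i]
      -- expand Lf w i = (Z w).1 + ⟪a i, (Z w).2⟫
      set s : Fin n → ℝ := fun i => ((-(Lf w i ^ 2)⁻¹) • ((Λ i).comp DZ)) ξ with hsdef
      have hs0 : ∑ i, s i = 0 := by
        rw [hsdef]
        have hconst : HasFDerivAt (fun y => ∑ i, q y i) (0 : EuclideanSpace ℝ (Fin d) →L[ℝ] ℝ) w := by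
          have : (fun y : EuclideanSpace ℝ (Fin d) => ∑ i, q y i) =ᶠ[𝓝 w]
              fun _ => (1:ℝ) := hw.mono fun y hy => hy.1.2.1
          exact (hasFDerivAt_const (1:ℝ) w).congr_of_eventuallyEq this
        have hsum : HasFDerivAt (fun y => ∑ i, q y i)
            (∑ i, (-(Lf w i ^ 2)⁻¹) • ((Λ i).comp DZ)) w := HasFDerivAt.fun_sum fun i _ => hqD i
        have := hsum.unique hconst
        calc ∑ i, ((-(Lf w i ^ 2)⁻¹) • ((Λ i).comp DZ)) ξ
            = (∑ i, (-(Lf w i ^ 2)⁻¹) • ((Λ i).comp DZ)) ξ := by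
              rw [ContinuousLinearMap.sum_apply]
          _ = 0 := by rw [this]; rfl
      have hsa : ∑ i, s i • a i = ξ := by
        rw [hsdef]
        have hid : HasFDerivAt (fun y : EuclideanSpace ℝ (Fin d) => ∑ i, q y i • a i)
            (ContinuousLinearMap.id ℝ (EuclideanSpace ℝ (Fin d))) w := by
          have : (fun y : EuclideanSpace ℝ (Fin d) => ∑ i, q y i • a i) =ᶠ[𝓝 w]
              id := hw.mono fun y hy => hy.1.2.2
          exact (hasFDerivAt_id w).congr_of_eventuallyEq this
        have hsum : HasFDerivAt (fun y : EuclideanSpace ℝ (Fin d) => ∑ i, q y i • a i)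
            (∑ i, ((-(Lf w i ^ 2)⁻¹) • ((Λ i).comp DZ)).smulRight (a i)) w :=
          HasFDerivAt.fun_sum fun i _ => (hqD i).smul_const (a i)
        have := hsum.unique hid
        calc ∑ i, (((-(Lf w i ^ 2)⁻¹) • ((Λ i).comp DZ)) ξ) • a i
            = (∑ i, ((-(Lf w i ^ 2)⁻¹) • ((Λ i).comp DZ)).smulRight (a i)) ξ := by
              rw [ContinuousLinearMap.sum_apply]
              rfl
          _ = ξ := by rw [this]; rfl
      calc ∑ i, Lf w i * s i
          = ∑ i, ((Z w).1 * s i + ⟪s i • a i, (Z w).2⟫) := by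
            apply Finset.sum_congr rfl
            intro i _
            rw [real_inner_smul_left, hLfdef]
            simp only []
            ring
        _ = (Z w).1 * ∑ i, s i + ⟪∑ i, s i • a i, (Z w).2⟫ := by
            rw [Finset.sum_add_distrib, Finset.mul_sum, sum_inner]
        _ = ⟪ξ, (Z w).2⟫ := by rw [hs0, hsa, mul_zero, zero_add]
  -- first derivative eventually
  have Hev1 : (fun y => fderiv ℝ (entropyU a) y ξ) =ᶠ[𝓝 x₀]
      fun y => ⟪ξ, (Z y).2⟫ := by
    filter_upwards [hbig2] with x' hx'
    exact (key x' hx').2.2.2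
  -- now compute at x₀
  obtain ⟨hqD₀, hs0₀, hsa₀, -⟩ := key x₀ hbig
  set DZ₀ := fderiv ℝ Z x₀ with hDZ₀def
  set s : Fin n → ℝ := fun i => ((-(Lf x₀ i ^ 2)⁻¹) • ((Λ i).comp DZ₀)) ξ with hsdef
  -- LHS
  have hY : HasFDerivAt (fun y => (Z y).2)
      ((ContinuousLinearMap.snd ℝ ℝ (EuclideanSpace ℝ (Fin d))).comp DZ₀) x₀ :=
    ((ContinuousLinearMap.snd ℝ ℝ (EuclideanSpace ℝ (Fin d))).hasFDerivAt).comp x₀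
      ((hZcd.differentiableAt two_ne_zero).hasFDerivAt)
  have hinner : HasFDerivAt (fun y => (⟪ξ, (Z y).2⟫:ℝ))
      ((innerSL ℝ ξ).comp
        ((ContinuousLinearMap.snd ℝ ℝ (EuclideanSpace ℝ (Fin d))).comp DZ₀)) x₀ :=
    ((innerSL ℝ ξ).hasFDerivAt).comp x₀ hY
  have hLHS : fderiv ℝ (fun y => fderiv ℝ (entropyU a) y ξ) x₀ ξ = ⟪ξ, (DZ₀ ξ).2⟫ := by
    rw [Hev1.fderiv_eq, hinner.fderiv]
    rfl
  -- RHS : identify fderiv of p with Dq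
  have hpq : ∀ᶠ x' in 𝓝 x₀, ∀ k, p x' k = q x' k := by
    filter_upwards [hC4, (isOpen_interior.mem_nhds hx₀ : interior P ∈ 𝓝 x₀)] with x' h4 hxP
    obtain ⟨hpos', h1', h2', hmax'⟩ := hp x' hxP
    have : p x' = q x' := h4.2 (p x') hpos' h1' h2' (by rw [hmax', h4.1])
    exact fun k => congrFun this k
  have hfp : ∀ k, fderiv ℝ (fun y => p y k) x₀ ξ = s k := by
    intro k
    have heq : (fun y => p y k) =ᶠ[𝓝 x₀] fun y => q y k :=
      hpq.mono fun x' h => h k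
    rw [heq.fderiv_eq, (hqD₀ k).fderiv]
  -- value of p and Lf at x₀
  have hLfx₀ : ∀ i, Lf x₀ i = (p x₀ i)⁻¹ := by
    intro i
    rw [hLfdef]
    simp only [hZx₀]
    exact (hL i).symm
  -- relation t_i and final algebra
  have hrel : ∀ i, ⟪a i, (DZ₀ ξ).2⟫ = -(Lf x₀ i ^ 2) * s i - (DZ₀ ξ).1 := by
    intro i
    have hsval : s i = (-(Lf x₀ i ^ 2)⁻¹) * ((DZ₀ ξ).1 + ⟪a i, (DZ₀ ξ).2⟫) := by
      rw [hsdef]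
      simp only [ContinuousLinearMap.smul_apply, ContinuousLinearMap.comp_apply, smul_eq_mul]
      rw [hΛapp]
    have hne : (Lf x₀ i ^ 2) ≠ 0 := pow_ne_zero 2 (by
      rw [hLfx₀ i]; exact (inv_pos.mpr (hpos i)).ne')
    have hmul : -(Lf x₀ i ^ 2) * s i = (DZ₀ ξ).1 + ⟪a i, (DZ₀ ξ).2⟫ := by
      rw [hsval]
      field_simp
      have hL0 : Lf x₀ i ≠ 0 := fun h => hne (by rw [h]; ring)
      exact mul_div_cancel_left₀ _ hL0
    linarith [hmul]
  have hfinal : ⟪ξ, (DZ₀ ξ).2⟫ = -∑ k, (s k) ^ 2 / (p x₀ k) ^ 2 := by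
    have e1 : (⟪ξ, (DZ₀ ξ).2⟫:ℝ) = ∑ i, s i * ⟪a i, (DZ₀ ξ).2⟫ := by
      rw [← hsa₀]
      rw [sum_inner]
      apply Finset.sum_congr rfl
      intro i _
      rw [real_inner_smul_left]
    rw [e1]
    rw [Finset.sum_congr rfl fun i _ => by rw [hrel i]]
    have e2 : ∑ i, s i * (-(Lf x₀ i ^ 2) * s i - (DZ₀ ξ).1)
        = ∑ i, (-(Lf x₀ i ^ 2) * s i ^ 2) - (∑ i, s i) * (DZ₀ ξ).1 := by
      rw [Finset.sum_mul, ← Finset.sum_sub_distrib]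
      apply Finset.sum_congr rfl
      intro i _
      ring
    rw [e2]
    have hs0' : ∑ i, s i = 0 := hs0₀
    rw [hs0', zero_mul, sub_zero, ← Finset.sum_neg_distrib]
    apply Finset.sum_congr rfl
    intro i _
    rw [hLfx₀ i, inv_pow, div_eq_mul_inv]
    ring
  rw [hLHS, hfinal]
  apply congrArg
  apply Finset.sum_congr rfl
  intro k _
  rw [hfp k]
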